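/- Suppose F = (1/n) Σ_{i=1}^n f_i is average-L-smooth, and let F* be a lower bound of F. Run SARAH with inner loop size m = n and learning rate η = 2/(3L√(n+1)), and let ε > 0. If S = ⌈3L(F(w̃_0) − F*)/(√(n+1) ε)⌉, then (1/((n+1)S)) Σ_{s=1}^{S} Σ_{t=0}^{n} E[‖∇F(w_t^{(s)})‖²] ≤ ε, and the total number of stochastic gradient evaluations satisfies S(n + 2n) ≤ 9√n · L(F(w̃_0) − F*)/ε + 3n. -/

import Mathlib

noncomputable section

abbrev Vec (d : ℕ) : Type := EuclideanSpace ℝ (Fin d)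

/-- One inner loop of SARAH: `(innerSeq d n f F η x0 ι t) = (w_t, v_t)`, where the step from
`t` to `t+1` uses the sampled index `ι t` (so `ι t` plays the role of `i_{t+1}`). -/
noncomputable def innerSeq (d n : ℕ) (f : Fin n → Vec d → ℝ) (F : Vec d → ℝ) (η : ℝ)
    (x0 : Vec d) (ι : ℕ → Fin n) : ℕ → Vec d × Vec d
  | 0 => (x0, gradient F x0)
  | t + 1 =>
    let p := innerSeq d n f F η x0 ι t
    let w := p.1 - η • p.2
    (w, gradient (f (ι t)) w - gradient (f (ι t)) p.1 + p.2)

/-- Outer iterates of SARAH: `outerSeq d n m f F η w0 ω s = w̃_s`, where the `s`-th outer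
loop uses the index sequence `ω s` and `w̃_s = w_{m+1}^{(s)}`. -/
noncomputable def outerSeq (d n m : ℕ) (f : Fin n → Vec d → ℝ) (F : Vec d → ℝ) (η : ℝ)
    (w0 : Vec d) (ω : ℕ → ℕ → Fin n) : ℕ → Vec d
  | 0 => w0
  | s + 1 => (innerSeq d n f F η (outerSeq d n m f F η w0 ω s) (ω s) (m + 1)).1

/-- Expectation over the uniformly random index sequences of SARAH with (at least) `S` outer
loops of `m` inner steps each: the average of `X` over all `ω : Fin S → Fin m → Fin n`,
extended by a dummy index outside this range. -/
noncomputable def sarahE (n m S : ℕ) (hn : 0 < n) (X : (ℕ → ℕ → Fin n) → ℝ) : ℝ :=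
  (∑ ω : Fin S → Fin m → Fin n,
      X fun s t => if h : s < S ∧ t < m then ω ⟨s, h.1⟩ ⟨t, h.2⟩ else ⟨0, hn⟩) /
    (Fintype.card (Fin S → Fin m → Fin n) : ℝ)

open Finset InnerProductSpace RealInnerProductSpace

namespace SarahAux

/-! ### Gradient and smoothness facts -/

lemma hasGradF {d n : ℕ} (f : Fin n → Vec d → ℝ) (F : Vec d → ℝ)
    (hF : ∀ w, F w = (∑ i, f i w) / n) (hdiff : ∀ i, Differentiable ℝ (f i)) (x : Vec d) :
    HasGradientAt F ((n : ℝ)⁻¹ • ∑ i, gradient (f i) x) x := by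
  have h0 : HasFDerivAt (fun w => ∑ i, f i w) (∑ i, fderiv ℝ (f i) x) x :=
    HasFDerivAt.fun_sum (fun i _ => (hdiff i x).hasFDerivAt)
  have h1 : HasFDerivAt F ((n : ℝ)⁻¹ • ∑ i, fderiv ℝ (f i) x) x := by
    have h2 := h0.const_smul ((n : ℝ)⁻¹)
    have hFe : F = fun w => (n : ℝ)⁻¹ • ∑ i, f i w := by
      funext w; rw [hF w, div_eq_inv_mul]; rfl
    rw [hFe]; exact h2
  have h3 := hasFDerivAt_iff_hasGradientAt.mp h1
  convert h3 using 1
  rw [map_smul, map_sum]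
  rfl

lemma gradF_eq {d n : ℕ} (f : Fin n → Vec d → ℝ) (F : Vec d → ℝ)
    (hF : ∀ w, F w = (∑ i, f i w) / n) (hdiff : ∀ i, Differentiable ℝ (f i)) (x : Vec d) :
    gradient F x = (n : ℝ)⁻¹ • ∑ i, gradient (f i) x :=
  (hasGradF f F hF hdiff x).gradient

lemma diffF {d n : ℕ} (f : Fin n → Vec d → ℝ) (F : Vec d → ℝ)
    (hF : ∀ w, F w = (∑ i, f i w) / n) (hdiff : ∀ i, Differentiable ℝ (f i)) :
    Differentiable ℝ F := fun x => (hasGradF f F hF hdiff x).differentiableAt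

lemma lipG {d n : ℕ} (hn : 0 < n) (f : Fin n → Vec d → ℝ) (F : Vec d → ℝ) {L : ℝ} (hL : 0 < L)
    (hF : ∀ w, F w = (∑ i, f i w) / n) (hdiff : ∀ i, Differentiable ℝ (f i))
    (havg : ∀ w w' : Vec d,
      (∑ i, ‖gradient (f i) w - gradient (f i) w'‖ ^ 2) / n ≤ L ^ 2 * ‖w - w'‖ ^ 2)
    (x y : Vec d) : ‖gradient F x - gradient F y‖ ≤ L * ‖x - y‖ := by
  have hng : (0:ℝ) < n := by exact_mod_cast hn
  have h1 : gradient F x - gradient F y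
      = (n : ℝ)⁻¹ • ∑ i, (gradient (f i) x - gradient (f i) y) := by
    rw [gradF_eq f F hF hdiff, gradF_eq f F hF hdiff, ← smul_sub, Finset.sum_sub_distrib]
  have h2 : ‖gradient F x - gradient F y‖
      ≤ (n:ℝ)⁻¹ * ∑ i, ‖gradient (f i) x - gradient (f i) y‖ := by
    rw [h1, norm_smul]
    gcongr
    · simp [abs_of_nonneg (le_of_lt (inv_pos.mpr hng))]
    · exact norm_sum_le _ _
  have h3 : (∑ i, ‖gradient (f i) x - gradient (f i) y‖)^2
      ≤ (n:ℝ) * ∑ i, ‖gradient (f i) x - gradient (f i) y‖^2 := by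
    have := sq_sum_le_card_mul_sum_sq (s := Finset.univ)
      (f := fun i => ‖gradient (f i) x - gradient (f i) y‖)
    simpa using this
  have h4 : (∑ i, ‖gradient (f i) x - gradient (f i) y‖^2) ≤ (n:ℝ) * (L^2 * ‖x - y‖^2) := by
    have := havg x y
    rw [div_le_iff₀ hng] at this
    linarith
  have h5 : ((n:ℝ)⁻¹ * ∑ i, ‖gradient (f i) x - gradient (f i) y‖)^2 ≤ (L * ‖x-y‖)^2 := by
    rw [mul_pow]
    have h6 : (∑ i, ‖gradient (f i) x - gradient (f i) y‖)^2 ≤ (n:ℝ)^2 * (L^2*‖x-y‖^2) := by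
      calc (∑ i, ‖gradient (f i) x - gradient (f i) y‖)^2
          ≤ (n:ℝ) * ∑ i, ‖gradient (f i) x - gradient (f i) y‖^2 := h3
        _ ≤ (n:ℝ) * ((n:ℝ) * (L^2*‖x-y‖^2)) := by gcongr
        _ = (n:ℝ)^2 * (L^2*‖x-y‖^2) := by ring
    calc ((n:ℝ)⁻¹)^2 * (∑ i, ‖gradient (f i) x - gradient (f i) y‖)^2
        ≤ ((n:ℝ)⁻¹)^2 * ((n:ℝ)^2 * (L^2*‖x-y‖^2)) := by gcongr
      _ = (L * ‖x-y‖)^2 := by field_simp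
  have hnn : 0 ≤ L * ‖x - y‖ := mul_nonneg hL.le (norm_nonneg _)
  nlinarith [h2, h5, norm_nonneg (gradient F x - gradient F y)]

lemma descent {d : ℕ} {F : Vec d → ℝ} {L : ℝ}
    (hdF : Differentiable ℝ F)
    (lip : ∀ x y : Vec d, ‖gradient F x - gradient F y‖ ≤ L * ‖x - y‖)
    (x u : Vec d) :
    F (x + u) ≤ F x + ⟪gradient F x, u⟫_ℝ + L / 2 * ‖u‖ ^ 2 := by
  have hgi : ∀ z : Vec d, ⟪gradient F z, u⟫_ℝ = fderiv ℝ F z u := by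
    intro z
    exact InnerProductSpace.toDual_symm_apply
  set φ : ℝ → ℝ := fun τ => F (x + τ • u) - τ * ⟪gradient F x, u⟫_ℝ - L/2 * τ^2 * ‖u‖^2 with hφ
  have key : ∀ τ : ℝ, HasDerivAt φ
      (⟪gradient F (x + τ • u), u⟫_ℝ - ⟪gradient F x, u⟫_ℝ - L * τ * ‖u‖^2) τ := by
    intro τ
    have hline : HasDerivAt (fun τ : ℝ => x + τ • u) u τ := by
      simpa using ((hasDerivAt_id τ).smul_const u).const_add x
    have hF1 : HasDerivAt (fun τ : ℝ => F (x + τ • u)) (⟪gradient F (x + τ • u), u⟫_ℝ) τ := by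
      have h2 := (hdF (x + τ • u)).hasFDerivAt.comp_hasDerivAt τ hline
      rw [hgi]
      exact h2
    have h3 : HasDerivAt (fun τ : ℝ => τ * ⟪gradient F x, u⟫_ℝ) (⟪gradient F x, u⟫_ℝ) τ :=
      hasDerivAt_mul_const _
    have h4 : HasDerivAt (fun τ : ℝ => L/2 * τ^2 * ‖u‖^2) (L * τ * ‖u‖^2) τ := by
      have := ((hasDerivAt_pow 2 τ).const_mul (L/2)).mul_const (‖u‖^2)
      refine this.congr_deriv ?_
      push_cast
      ring
    exact (hF1.sub h3).sub h4
  have hanti : AntitoneOn φ (Set.Icc (0:ℝ) 1) := by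
    apply antitoneOn_of_deriv_nonpos (convex_Icc 0 1)
    · exact fun τ _ => (key τ).differentiableAt.continuousAt.continuousWithinAt
    · intro τ _
      exact (key τ).differentiableAt.differentiableWithinAt
    · intro τ hτ
      rw [interior_Icc] at hτ
      rw [(key τ).deriv]
      have h5 : ⟪gradient F (x + τ•u) - gradient F x, u⟫_ℝ ≤ L*τ*‖u‖^2 := by
        calc ⟪gradient F (x + τ•u) - gradient F x, u⟫_ℝ
            ≤ ‖gradient F (x+τ•u) - gradient F x‖ * ‖u‖ := real_inner_le_norm _ _
          _ ≤ (L * ‖(x + τ•u) - x‖) * ‖u‖ := by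
              have := lip (x + τ•u) x
              gcongr
          _ = L * τ * ‖u‖^2 := by
              rw [add_sub_cancel_left, norm_smul]
              simp [abs_of_pos hτ.1]
              ring
      rw [inner_sub_left] at h5
      linarith
  have h6 := hanti (Set.left_mem_Icc.mpr zero_le_one) (Set.right_mem_Icc.mpr zero_le_one)
    zero_le_one
  simp only [hφ, one_smul, one_pow, one_mul, zero_smul, add_zero, zero_pow, mul_zero, zero_mul,
    sub_zero, mul_one] at h6
  linarith

/-! ### Splitting a sum over a function type at one coordinate -/

/-- insert value `b` at coordinate `k`. -/
def ins {α β : Type*} [DecidableEq α] (k : α) (b : β) (r : {j // j ≠ k} → β) : α → β :=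
  fun j => if h : j = k then b else r ⟨j, h⟩

@[simp] lemma ins_self {α β : Type*} [DecidableEq α] (k : α) (b : β) (r : {j // j ≠ k} → β) :
    ins k b r k = b := by simp [ins]

lemma ins_ne {α β : Type*} [DecidableEq α] (k : α) (b : β) (r : {j // j ≠ k} → β)
    {j : α} (h : j ≠ k) : ins k b r j = r ⟨j, h⟩ := by simp [ins, h]

lemma sum_split {α β : Type*} [Fintype α] [DecidableEq α] [Fintype β] (k : α)
    (g : (α → β) → ℝ) :
    ∑ p : α → β, g p = ∑ r : {j // j ≠ k} → β, ∑ b : β, g (ins k b r) := by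
  rw [← Equiv.sum_comp (Equiv.funSplitAt k β).symm g, Fintype.sum_prod_type, Finset.sum_comm]
  apply Finset.sum_congr rfl
  intro r _
  apply Finset.sum_congr rfl
  intro b _
  congr 1
  funext j
  by_cases h : j = k
  · subst h; simp [ins, Equiv.funSplitAt, Equiv.piSplitAt]
  · simp [ins, h, Equiv.funSplitAt, Equiv.piSplitAt]

/-! ### Basic properties of the SARAH recursion -/

section Seq
variable {d n : ℕ} (f : Fin n → Vec d → ℝ) (F : Vec d → ℝ) (η : ℝ) (x0 : Vec d)

lemma innerSeq_succ_fst (ι : ℕ → Fin n) (t : ℕ) :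
    (innerSeq d n f F η x0 ι (t+1)).1
      = (innerSeq d n f F η x0 ι t).1 - η • (innerSeq d n f F η x0 ι t).2 := rfl

lemma innerSeq_succ_snd (ι : ℕ → Fin n) (t : ℕ) :
    (innerSeq d n f F η x0 ι (t+1)).2
      = gradient (f (ι t)) ((innerSeq d n f F η x0 ι (t+1)).1)
        - gradient (f (ι t)) ((innerSeq d n f F η x0 ι t).1)
        + (innerSeq d n f F η x0 ι t).2 := rfl

lemma innerSeq_congr (ι ι' : ℕ → Fin n) (t : ℕ) (h : ∀ j < t, ι j = ι' j) :
    innerSeq d n f F η x0 ι t = innerSeq d n f F η x0 ι' t := by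
  induction t with
  | zero => rfl
  | succ t ih =>
    have h1 := ih (fun j hj => h j (Nat.lt_succ_of_lt hj))
    show (let p := innerSeq d n f F η x0 ι t
      let w := p.1 - η • p.2
      (w, gradient (f (ι t)) w - gradient (f (ι t)) p.1 + p.2)) = _
    rw [h1, h t (Nat.lt_succ_self t)]
    rfl

lemma innerSeq_fst_congr (ι ι' : ℕ → Fin n) (t : ℕ) (h : ∀ j < t, ι j = ι' j) :
    (innerSeq d n f F η x0 ι (t+1)).1 = (innerSeq d n f F η x0 ι' (t+1)).1 := by
  rw [innerSeq_succ_fst, innerSeq_succ_fst, innerSeq_congr f F η x0 ι ι' t h]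

lemma outerSeq_congr (m : ℕ) (w0 : Vec d) (ω ω' : ℕ → ℕ → Fin n) (s : ℕ)
    (h : ∀ s' < s, ∀ t < m, ω s' t = ω' s' t) :
    outerSeq d n m f F η w0 ω s = outerSeq d n m f F η w0 ω' s := by
  induction s with
  | zero => rfl
  | succ s ih =>
    have h1 := ih (fun s' hs' t ht => h s' (Nat.lt_succ_of_lt hs') t ht)
    show (innerSeq d n f F η (outerSeq d n m f F η w0 ω s) (ω s) (m + 1)).1 = _
    rw [h1]
    exact innerSeq_fst_congr f F η _ _ _ m (fun j hj => h s (Nat.lt_succ_self s) j hj)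

end Seq

/-! ### Martingale variance step -/

lemma var_step {d n : ℕ} (hn : 0 < n) (f : Fin n → Vec d → ℝ) (F : Vec d → ℝ) {L η : ℝ}
    (hη : 0 ≤ η)
    (hgrad : ∀ x, gradient F x = (n : ℝ)⁻¹ • ∑ i, gradient (f i) x)
    (havg : ∀ w w' : Vec d,
      (∑ i, ‖gradient (f i) w - gradient (f i) w'‖ ^ 2) / n ≤ L ^ 2 * ‖w - w'‖ ^ 2)
    (w v : Vec d) :
    ∑ b : Fin n, ‖gradient F (w - η • v) - (gradient (f b) (w - η • v) - gradient (f b) w + v)‖ ^ 2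
      ≤ n * (‖gradient F w - v‖ ^ 2 + L ^ 2 * η ^ 2 * ‖v‖ ^ 2) := by
  have hng : (0:ℝ) < n := by exact_mod_cast hn
  set w' := w - η • v with hw'
  have hsumf : ∀ x : Vec d, ∑ b : Fin n, gradient (f b) x = (n : ℝ) • gradient F x := by
    intro x
    rw [hgrad x, smul_smul, mul_inv_cancel₀ (ne_of_gt hng), one_smul]
  set D := gradient F w - v with hD
  set a := gradient F w' - gradient F w with ha
  set bb : Fin n → Vec d := fun b => gradient (f b) w' - gradient (f b) w with hbb
  have hterm : ∀ b : Fin n,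
      gradient F w' - (gradient (f b) w' - gradient (f b) w + v) = D + (a - bb b) := by
    intro b
    simp only [hD, ha, hbb]
    abel
  have hsumbb : ∑ b : Fin n, bb b = (n : ℝ) • a := by
    simp only [hbb, ha]
    rw [Finset.sum_sub_distrib, hsumf, hsumf, smul_sub]
  have hsumY : ∑ b : Fin n, (a - bb b) = 0 := by
    rw [Finset.sum_sub_distrib, hsumbb, Finset.sum_const]
    simp [Finset.card_univ, Nat.cast_smul_eq_nsmul ℝ]
  have hbbsum : ∑ b : Fin n, ‖bb b‖ ^ 2 ≤ (n:ℝ) * (L ^ 2 * η ^ 2 * ‖v‖ ^ 2) := by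
    have h1 := havg w' w
    rw [div_le_iff₀ hng] at h1
    have h2 : ‖w' - w‖ ^ 2 = η ^ 2 * ‖v‖ ^ 2 := by
      rw [hw']
      have h2' : w - η • v - w = -(η • v) := by abel
      rw [h2', norm_neg, norm_smul]
      simp [abs_of_nonneg hη]
      ring
    calc ∑ b : Fin n, ‖bb b‖ ^ 2 ≤ L ^ 2 * ‖w' - w‖ ^ 2 * n := h1
      _ = (n:ℝ) * (L ^ 2 * η ^ 2 * ‖v‖ ^ 2) := by rw [h2]; ring
  have hYsum : ∑ b : Fin n, ‖a - bb b‖ ^ 2 ≤ (n:ℝ) * (L ^ 2 * η ^ 2 * ‖v‖ ^ 2) := by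
    have expand : ∀ b : Fin n, ‖a - bb b‖ ^ 2 = ‖a‖ ^ 2 - 2 * ⟪a, bb b⟫_ℝ + ‖bb b‖ ^ 2 :=
      fun b => norm_sub_sq_real a (bb b)
    have h3 : ∑ b : Fin n, ‖a - bb b‖ ^ 2
        = (n:ℝ) * ‖a‖ ^ 2 - 2 * ⟪a, (n:ℝ) • a⟫_ℝ + ∑ b : Fin n, ‖bb b‖ ^ 2 := by
      rw [Finset.sum_congr rfl (fun b _ => expand b)]
      rw [Finset.sum_add_distrib, Finset.sum_sub_distrib, Finset.sum_const, ← hsumbb,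
        inner_sum]
      simp [Finset.card_univ, Finset.mul_sum, nsmul_eq_mul]
    rw [h3]
    have h4 : ⟪a, (n:ℝ) • a⟫_ℝ = (n:ℝ) * ‖a‖ ^ 2 := by
      rw [real_inner_smul_right, real_inner_self_eq_norm_sq]
    rw [h4]
    have h5 : 0 ≤ (n:ℝ) * ‖a‖ ^ 2 := by positivity
    linarith [hbbsum]
  calc ∑ b : Fin n, ‖gradient F w' - (gradient (f b) w' - gradient (f b) w + v)‖ ^ 2
      = ∑ b : Fin n, (‖D‖ ^ 2 + 2 * ⟪D, a - bb b⟫_ℝ + ‖a - bb b‖ ^ 2) := by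
        refine Finset.sum_congr rfl fun b _ => ?_
        rw [hterm b, norm_add_sq_real]
    _ = (n:ℝ) * ‖D‖ ^ 2 + 2 * ⟪D, ∑ b : Fin n, (a - bb b)⟫_ℝ
          + ∑ b : Fin n, ‖a - bb b‖ ^ 2 := by
        rw [Finset.sum_add_distrib, Finset.sum_add_distrib, Finset.sum_const, inner_sum]
        simp [Finset.card_univ, Finset.mul_sum, nsmul_eq_mul]
    _ = (n:ℝ) * ‖D‖ ^ 2 + ∑ b : Fin n, ‖a - bb b‖ ^ 2 := by
        rw [hsumY, inner_zero_right]; ring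
    _ ≤ (n:ℝ) * ‖D‖ ^ 2 + (n:ℝ) * (L ^ 2 * η ^ 2 * ‖v‖ ^ 2) := by linarith [hYsum]
    _ = (n:ℝ) * (‖D‖ ^ 2 + L ^ 2 * η ^ 2 * ‖v‖ ^ 2) := by ring

/-! ### Numeric conditions on the step size -/

lemma numeric {L η : ℝ} (n : ℕ) (hL : 0 < L) (hη : η = 2 / (3 * L * Real.sqrt ((n:ℝ) + 1))) :
    0 < η ∧ L ^ 2 * η ^ 2 * n + L * η ≤ 1 := by
  have hq0 : 0 < Real.sqrt ((n:ℝ)+1) := Real.sqrt_pos.mpr (by positivity)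
  set q := Real.sqrt ((n:ℝ)+1) with hqdef
  have hq : q * q = (n:ℝ) + 1 := Real.mul_self_sqrt (by positivity)
  have hη0 : 0 < η := by rw [hη]; positivity
  refine ⟨hη0, ?_⟩
  have hc : L * η * q = 2/3 := by
    rw [hη]; field_simp
  set c := L * η with hcdef
  have hc0 : 0 < c := mul_pos hL hη0
  have hc2 : c^2 * (q*q) = 4/9 := by nlinarith [hc]
  have hn' : c^2 * (n:ℝ) = 4/9 - c^2 := by
    have : (n:ℝ) = q*q - 1 := by linarith
    rw [this]
    linear_combination hc2
  have : L^2 * η^2 = c^2 := by rw [hcdef]; ring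
  rw [this, hn']
  nlinarith [sq_nonneg (c - 1/2)]

/-! ### Pathwise descent over one epoch -/

lemma pathwise {d n : ℕ} (f : Fin n → Vec d → ℝ) (F : Vec d → ℝ) {L η : ℝ}
    (hη0 : 0 < η)
    (hdF : Differentiable ℝ F)
    (lip : ∀ x y : Vec d, ‖gradient F x - gradient F y‖ ≤ L * ‖x - y‖)
    (x0 : Vec d) (ι : ℕ → Fin n) (T : ℕ) :
    F ((innerSeq d n f F η x0 ι T).1)
      + ∑ t ∈ Finset.range T,
          (η/2 * ‖gradient F (innerSeq d n f F η x0 ι t).1‖^2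
           + (η/2*(1-L*η)) * ‖(innerSeq d n f F η x0 ι t).2‖^2
           - η/2 * ‖gradient F (innerSeq d n f F η x0 ι t).1 - (innerSeq d n f F η x0 ι t).2‖^2)
      ≤ F x0 := by
  induction T with
  | zero => simp [innerSeq]
  | succ T ih =>
    rw [Finset.sum_range_succ]
    set g := gradient F (innerSeq d n f F η x0 ι T).1 with hg
    set v := (innerSeq d n f F η x0 ι T).2 with hv
    have hstep : (innerSeq d n f F η x0 ι (T+1)).1
        = (innerSeq d n f F η x0 ι T).1 + -(η • v) := by
      rw [innerSeq_succ_fst]; abel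
    have hd := descent hdF lip ((innerSeq d n f F η x0 ι T).1) (-(η • v))
    rw [← hstep] at hd
    have hi1 : ⟪g, -(η • v)⟫_ℝ = -(η * ⟪g, v⟫_ℝ) := by
      rw [inner_neg_right, real_inner_smul_right]
    have hi2 : ‖-(η • v)‖^2 = η^2 * ‖v‖^2 := by
      rw [norm_neg, norm_smul]
      simp [abs_of_pos hη0]
      ring
    rw [hi1, hi2] at hd
    have hinner : ⟪g, v⟫_ℝ = (‖g‖^2 + ‖v‖^2 - ‖g - v‖^2)/2 := by
      have := norm_sub_sq_real g v; linarith
    rw [hinner] at hd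
    have hd' : F ((innerSeq d n f F η x0 ι (T+1)).1)
        + (η/2 * ‖g‖^2 + (η/2*(1-L*η)) * ‖v‖^2 - η/2 * ‖g - v‖^2)
        ≤ F ((innerSeq d n f F η x0 ι T).1) := by nlinarith [hd]
    linarith [ih]

/-! ### One epoch in expectation -/

def padI {n : ℕ} (hn : 0 < n) (ι : Fin n → Fin n) : ℕ → Fin n :=
  fun t => if h : t < n then ι ⟨t, h⟩ else ⟨0, hn⟩

lemma epoch {d n : ℕ} (hn : 0 < n) (f : Fin n → Vec d → ℝ) (F : Vec d → ℝ) {L η : ℝ}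
    (hL : 0 < L) (hη0 : 0 < η)
    (hF : ∀ w, F w = (∑ i, f i w) / n) (hdiff : ∀ i, Differentiable ℝ (f i))
    (havg : ∀ w w' : Vec d,
      (∑ i, ‖gradient (f i) w - gradient (f i) w'‖ ^ 2) / n ≤ L ^ 2 * ‖w - w'‖ ^ 2)
    (hcond : L ^ 2 * η ^ 2 * n + L * η ≤ 1)
    (x0 : Vec d) :
    (∑ b : Fin n → Fin n, ∑ t ∈ Finset.range (n+1),
        ‖gradient F (innerSeq d n f F η x0 (padI hn b) t).1‖ ^ 2)
      + (2/η) * ∑ b : Fin n → Fin n, F ((innerSeq d n f F η x0 (padI hn b) (n+1)).1)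
      ≤ (2/η) * ∑ b : Fin n → Fin n, F x0 := by
  have hdF : Differentiable ℝ F := diffF f F hF hdiff
  have lip := lipG hn f F hL hF hdiff havg
  have hgrad := gradF_eq f F hF hdiff
  set A : ℕ → ℝ := fun t => ∑ b : Fin n → Fin n,
    ‖gradient F (innerSeq d n f F η x0 (padI hn b) t).1‖ ^ 2 with hA
  set B : ℕ → ℝ := fun t => ∑ b : Fin n → Fin n,
    ‖(innerSeq d n f F η x0 (padI hn b) t).2‖ ^ 2 with hB
  set Dq : ℕ → ℝ := fun t => ∑ b : Fin n → Fin n,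
    ‖gradient F (innerSeq d n f F η x0 (padI hn b) t).1
      - (innerSeq d n f F η x0 (padI hn b) t).2‖ ^ 2 with hDq
  have hAnn : ∀ t, 0 ≤ A t := fun t => Finset.sum_nonneg fun b _ => by positivity
  have hBnn : ∀ t, 0 ≤ B t := fun t => Finset.sum_nonneg fun b _ => by positivity
  have hDqnn : ∀ t, 0 ≤ Dq t := fun t => Finset.sum_nonneg fun b _ => by positivity
  -- pathwise bound, summed over all index sequences
  have hsum : (∑ b : Fin n → Fin n, F ((innerSeq d n f F η x0 (padI hn b) (n+1)).1))
      + ∑ t ∈ Finset.range (n+1),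
          (η/2 * A t + (η/2*(1-L*η)) * B t - η/2 * Dq t)
      ≤ ∑ b : Fin n → Fin n, F x0 := by
    have h2 : ∀ t, η/2 * A t + (η/2*(1-L*η)) * B t - η/2 * Dq t
        = ∑ b : Fin n → Fin n,
            (η/2 * ‖gradient F (innerSeq d n f F η x0 (padI hn b) t).1‖^2
             + (η/2*(1-L*η)) * ‖(innerSeq d n f F η x0 (padI hn b) t).2‖^2
             - η/2 * ‖gradient F (innerSeq d n f F η x0 (padI hn b) t).1
                - (innerSeq d n f F η x0 (padI hn b) t).2‖^2) := by
      intro t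
      simp only [hA, hB, hDq, Finset.mul_sum, Finset.sum_add_distrib, Finset.sum_sub_distrib]
    rw [Finset.sum_congr rfl (fun t _ => h2 t), Finset.sum_comm, ← Finset.sum_add_distrib]
    exact Finset.sum_le_sum (fun b _ => pathwise f F hη0 hdF lip x0 (padI hn b) (n+1))
  -- variance recursion in expectation
  have hVstep : ∀ u, u < n → Dq (u+1) ≤ Dq u + L^2*η^2 * B u := by
    intro u hu
    set k : Fin n := ⟨u, hu⟩ with hk
    set b0 : Fin n := ⟨0, hn⟩ with hb0
    have hsplit1 : Dq (u+1) = ∑ r : {j // j ≠ k} → Fin n, ∑ b : Fin n,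
        ‖gradient F (innerSeq d n f F η x0 (padI hn (ins k b r)) (u+1)).1
          - (innerSeq d n f F η x0 (padI hn (ins k b r)) (u+1)).2‖ ^ 2 := by
      simp only [hDq]
      exact sum_split k _
    have hsplit2 : Dq u + L^2*η^2 * B u = ∑ r : {j // j ≠ k} → Fin n, ∑ b : Fin n,
        (‖gradient F (innerSeq d n f F η x0 (padI hn (ins k b r)) u).1
          - (innerSeq d n f F η x0 (padI hn (ins k b r)) u).2‖ ^ 2
         + L^2*η^2 * ‖(innerSeq d n f F η x0 (padI hn (ins k b r)) u).2‖ ^ 2) := by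
      have := sum_split (β := Fin n) k (fun p =>
        ‖gradient F (innerSeq d n f F η x0 (padI hn p) u).1
          - (innerSeq d n f F η x0 (padI hn p) u).2‖ ^ 2
         + L^2*η^2 * ‖(innerSeq d n f F η x0 (padI hn p) u).2‖ ^ 2)
      simp only [hDq, hB, Finset.mul_sum, ← Finset.sum_add_distrib]
      exact this
    rw [hsplit1, hsplit2]
    apply Finset.sum_le_sum
    intro r _
    have hagree : ∀ (b : Fin n) (j : ℕ), j < u →
        padI hn (ins k b r) j = padI hn (ins k b0 r) j := by
      intro b j hj
      have hjn : j < n := hj.trans hu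
      have hne : (⟨j, hjn⟩ : Fin n) ≠ k := by
        rw [hk]
        exact Fin.ne_of_val_ne (Nat.ne_of_lt hj)
      simp only [padI, dif_pos hjn]
      rw [ins_ne k b r hne, ins_ne k b0 r hne]
    have hWu : ∀ b : Fin n, innerSeq d n f F η x0 (padI hn (ins k b r)) u
        = innerSeq d n f F η x0 (padI hn (ins k b0 r)) u :=
      fun b => innerSeq_congr f F η x0 _ _ u (hagree b)
    have hW1 : ∀ b : Fin n, (innerSeq d n f F η x0 (padI hn (ins k b r)) (u+1)).1
        = (innerSeq d n f F η x0 (padI hn (ins k b0 r)) (u+1)).1 :=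
      fun b => innerSeq_fst_congr f F η x0 _ _ u (hagree b)
    have hval : ∀ b : Fin n, padI hn (ins k b r) u = b := by
      intro b
      simp only [padI, dif_pos hu]
      exact ins_self k b r
    set w := (innerSeq d n f F η x0 (padI hn (ins k b0 r)) u).1 with hw
    set v := (innerSeq d n f F η x0 (padI hn (ins k b0 r)) u).2 with hv
    have hw1 : (innerSeq d n f F η x0 (padI hn (ins k b0 r)) (u+1)).1 = w - η • v :=
      innerSeq_succ_fst f F η x0 _ u
    have hV1 : ∀ b : Fin n, (innerSeq d n f F η x0 (padI hn (ins k b r)) (u+1)).2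
        = gradient (f b) (w - η • v) - gradient (f b) w + v := by
      intro b
      rw [innerSeq_succ_snd, hval b, hW1 b, hw1, hWu b, ← hw, ← hv]
    have hcalc : ∑ b : Fin n,
        ‖gradient F (innerSeq d n f F η x0 (padI hn (ins k b r)) (u+1)).1
          - (innerSeq d n f F η x0 (padI hn (ins k b r)) (u+1)).2‖ ^ 2
        = ∑ b : Fin n, ‖gradient F (w - η • v)
            - (gradient (f b) (w - η • v) - gradient (f b) w + v)‖ ^ 2 := by
      refine Finset.sum_congr rfl fun b _ => ?_
      rw [hW1 b, hw1, hV1 b]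
    rw [hcalc]
    have hrhs : ∑ b : Fin n,
        (‖gradient F (innerSeq d n f F η x0 (padI hn (ins k b r)) u).1
          - (innerSeq d n f F η x0 (padI hn (ins k b r)) u).2‖ ^ 2
         + L^2*η^2 * ‖(innerSeq d n f F η x0 (padI hn (ins k b r)) u).2‖ ^ 2)
        = (n:ℝ) * (‖gradient F w - v‖ ^ 2 + L ^ 2 * η ^ 2 * ‖v‖ ^ 2) := by
      have heach : ∀ b : Fin n,
          ‖gradient F (innerSeq d n f F η x0 (padI hn (ins k b r)) u).1
            - (innerSeq d n f F η x0 (padI hn (ins k b r)) u).2‖ ^ 2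
           + L^2*η^2 * ‖(innerSeq d n f F η x0 (padI hn (ins k b r)) u).2‖ ^ 2
          = ‖gradient F w - v‖ ^ 2 + L ^ 2 * η ^ 2 * ‖v‖ ^ 2 := by
        intro b
        rw [hWu b, ← hw, ← hv]
      rw [Finset.sum_congr rfl (fun b _ => heach b), Finset.sum_const]
      simp only [Finset.card_univ, Fintype.card_fin, nsmul_eq_mul]
    rw [hrhs]
    exact var_step hn f F hη0.le hgrad havg w v
  -- iterate the variance recursion
  have hDq0 : Dq 0 = 0 := by
    simp only [hDq]
    apply Finset.sum_eq_zero
    intro b _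
    show ‖gradient F (innerSeq d n f F η x0 (padI hn b) 0).1
      - (innerSeq d n f F η x0 (padI hn b) 0).2‖ ^ 2 = 0
    have : (innerSeq d n f F η x0 (padI hn b) 0) = (x0, gradient F x0) := rfl
    rw [this]
    simp
  have hDqle : ∀ t, t ≤ n → Dq t ≤ L^2*η^2 * ∑ j ∈ Finset.range t, B j := by
    intro t
    induction t with
    | zero => intro _; simp [hDq0]
    | succ t ih =>
      intro ht
      have ht' : t < n := ht
      have h1 := hVstep t ht'
      have h2 := ih (Nat.le_of_lt ht')
      rw [Finset.sum_range_succ, mul_add]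
      linarith
  have hDqsum : ∑ t ∈ Finset.range (n+1), Dq t
      ≤ L^2*η^2 * ((n:ℝ) * ∑ t ∈ Finset.range (n+1), B t) := by
    have h1 : ∑ t ∈ Finset.range (n+1), Dq t
        ≤ ∑ t ∈ Finset.range (n+1), (L^2*η^2 * ∑ j ∈ Finset.range t, B j) :=
      Finset.sum_le_sum fun t ht => hDqle t (Nat.lt_succ_iff.mp (Finset.mem_range.mp ht))
    have h2 : ∑ t ∈ Finset.range (n+1), (L^2*η^2 * ∑ j ∈ Finset.range t, B j)
        = L^2*η^2 * ∑ t ∈ Finset.range (n+1), ∑ j ∈ Finset.range t, B j := by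
      rw [Finset.mul_sum]
    have h3 : ∑ t ∈ Finset.range (n+1), ∑ j ∈ Finset.range t, B j
        ≤ (n:ℝ) * ∑ t ∈ Finset.range (n+1), B t := by
      rw [Finset.sum_range_succ']
      have h4 : ∀ t, t ∈ Finset.range n → ∑ j ∈ Finset.range (t+1), B j
          ≤ ∑ j ∈ Finset.range (n+1), B j := by
        intro t ht
        apply Finset.sum_le_sum_of_subset_of_nonneg
        · exact Finset.range_subset_range.mpr (Nat.succ_le_succ (Nat.le_of_lt (Finset.mem_range.mp ht)))
        · intro j _ _; exact hBnn j
      calc (∑ t ∈ Finset.range n, ∑ j ∈ Finset.range (t+1), B j) + ∑ j ∈ Finset.range 0, B j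
          = ∑ t ∈ Finset.range n, ∑ j ∈ Finset.range (t+1), B j := by simp
        _ ≤ ∑ t ∈ Finset.range n, ∑ j ∈ Finset.range (n+1), B j := Finset.sum_le_sum h4
        _ = (n:ℝ) * ∑ t ∈ Finset.range (n+1), B t := by
            rw [Finset.sum_const, Finset.card_range, nsmul_eq_mul]
      -- done
    calc ∑ t ∈ Finset.range (n+1), Dq t
        ≤ L^2*η^2 * ∑ t ∈ Finset.range (n+1), ∑ j ∈ Finset.range t, B j := by rw [← h2]; exact h1
      _ ≤ L^2*η^2 * ((n:ℝ) * ∑ t ∈ Finset.range (n+1), B t) := by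
          apply mul_le_mul_of_nonneg_left h3 (by positivity)
  -- combine
  have hABD : ∑ t ∈ Finset.range (n+1), (η/2 * A t + (η/2*(1-L*η)) * B t - η/2 * Dq t)
      = η/2 * ∑ t ∈ Finset.range (n+1), A t + (η/2*(1-L*η)) * ∑ t ∈ Finset.range (n+1), B t
        - η/2 * ∑ t ∈ Finset.range (n+1), Dq t := by
    rw [Finset.sum_sub_distrib, Finset.sum_add_distrib, Finset.mul_sum, Finset.mul_sum,
      Finset.mul_sum]
  rw [hABD] at hsum
  have hBsum : 0 ≤ ∑ t ∈ Finset.range (n+1), B t :=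
    Finset.sum_nonneg fun t _ => hBnn t
  have hcomb : (∑ b : Fin n → Fin n, F ((innerSeq d n f F η x0 (padI hn b) (n+1)).1))
      + η/2 * ∑ t ∈ Finset.range (n+1), A t ≤ ∑ b : Fin n → Fin n, F x0 := by
    have h5 : η/2 * ∑ t ∈ Finset.range (n+1), Dq t
        ≤ η/2 * (L^2*η^2 * ((n:ℝ) * ∑ t ∈ Finset.range (n+1), B t)) :=
      mul_le_mul_of_nonneg_left hDqsum (by positivity)
    have h6 : L^2*η^2*(n:ℝ) ≤ 1 - L*η := by linarith [hcond]
    have h7 : η/2 * (L^2*η^2 * ((n:ℝ) * ∑ t ∈ Finset.range (n+1), B t))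
        ≤ (η/2*(1-L*η)) * ∑ t ∈ Finset.range (n+1), B t := by
      have : η/2 * (L^2*η^2 * ((n:ℝ) * ∑ t ∈ Finset.range (n+1), B t))
          = (η/2) * (L^2*η^2*(n:ℝ)) * ∑ t ∈ Finset.range (n+1), B t := by ring
      rw [this]
      apply mul_le_mul_of_nonneg_right _ hBsum
      have := mul_le_mul_of_nonneg_left h6 (by positivity : (0:ℝ) ≤ η/2)
      linarith
    linarith
  -- conclude, multiplying by 2/η
  have h8 : (2/η) * ((∑ b : Fin n → Fin n, F ((innerSeq d n f F η x0 (padI hn b) (n+1)).1))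
      + η/2 * ∑ t ∈ Finset.range (n+1), A t) ≤ (2/η) * ∑ b : Fin n → Fin n, F x0 :=
    mul_le_mul_of_nonneg_left hcomb (by positivity)
  have h9 : (2/η) * (η/2 * ∑ t ∈ Finset.range (n+1), A t)
      = ∑ t ∈ Finset.range (n+1), A t := by
    field_simp
  have h10 : (∑ b : Fin n → Fin n, ∑ t ∈ Finset.range (n+1),
      ‖gradient F (innerSeq d n f F η x0 (padI hn b) t).1‖ ^ 2)
      = ∑ t ∈ Finset.range (n+1), A t := by
    rw [Finset.sum_comm]
  rw [h10]
  rw [mul_add, h9] at h8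
  linarith

/-! ### The outer loop -/

def pad2 {n S : ℕ} (hn : 0 < n) (ω : Fin S → Fin n → Fin n) : ℕ → ℕ → Fin n :=
  fun s t => if h : s < S ∧ t < n then ω ⟨s, h.1⟩ ⟨t, h.2⟩ else ⟨0, hn⟩

lemma sarahE_eq {n S : ℕ} (hn : 0 < n) (X : (ℕ → ℕ → Fin n) → ℝ) :
    sarahE n n S hn X = (∑ ω : Fin S → Fin n → Fin n, X (pad2 hn ω)) /
      (Fintype.card (Fin S → Fin n → Fin n) : ℝ) := rfl

end SarahAux

open SarahAux

/-- **Optimal complexity of SARAH for smooth nonconvex optimization** (Statement 3,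
Corollary 2 of the paper). With inner loop size `m = n`, learning rate
`η = 2/(3L√(n+1))` and `S = ⌈3L(F(w̃_0) - F*)/(√(n+1)ε)⌉` outer iterations, the average
of the expected squared gradient norms is at most `ε`, and the total number of
stochastic gradient evaluations satisfies `S(n + 2n) ≤ 9√n·L(F(w̃_0) - F*)/ε + 3n`. -/
theorem sarah_nonconvex_optimal_complexity
    (d n S : ℕ) (hn : 0 < n)
    (f : Fin n → Vec d → ℝ) (F : Vec d → ℝ)
    (hF : ∀ w, F w = (∑ i, f i w) / n)
    (hdiff : ∀ i, Differentiable ℝ (f i))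
    (L η : ℝ) (hL : 0 < L)
    (havg : ∀ w w' : Vec d,
      (∑ i, ‖gradient (f i) w - gradient (f i) w'‖ ^ 2) / n ≤ L ^ 2 * ‖w - w'‖ ^ 2)
    (hη : η = 2 / (3 * L * Real.sqrt ((n : ℝ) + 1)))
    (w0 : Vec d) (Fstar : ℝ) (hFstar : ∀ w, Fstar ≤ F w)
    (ε : ℝ) (hε : 0 < ε)
    (hS : S = ⌈3 * L * (F w0 - Fstar) / (Real.sqrt ((n : ℝ) + 1) * ε)⌉₊) :
    1 / (((n : ℝ) + 1) * (S : ℝ)) *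
        ∑ s ∈ Finset.range S, ∑ t ∈ Finset.range (n + 1),
          sarahE n n S hn (fun ω =>
            ‖gradient F (innerSeq d n f F η (outerSeq d n n f F η w0 ω s) (ω s) t).1‖ ^ 2)
      ≤ ε
    ∧ ((S * (n + 2 * n) : ℕ) : ℝ)
        ≤ 9 * Real.sqrt (n : ℝ) * L * (F w0 - Fstar) / ε + 3 * (n : ℝ) := by
  have hΔ : 0 ≤ F w0 - Fstar := by linarith [hFstar w0]
  have hq0 : 0 < Real.sqrt ((n:ℝ)+1) := Real.sqrt_pos.mpr (by positivity)
  set q := Real.sqrt ((n:ℝ)+1) with hqdef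
  have hq : q * q = (n:ℝ) + 1 := Real.mul_self_sqrt (by positivity)
  obtain ⟨hη0, hcond⟩ := numeric n hL hη
  have h2η : 2/η = 3*L*q := by
    rw [hη]
    field_simp
  -- Part 2 first (pure arithmetic)
  have part2 : ((S * (n + 2 * n) : ℕ) : ℝ)
      ≤ 9 * Real.sqrt (n : ℝ) * L * (F w0 - Fstar) / ε + 3 * (n : ℝ) := by
    have hcast : ((S * (n + 2 * n) : ℕ) : ℝ) = (S:ℝ) * (3*(n:ℝ)) := by push_cast; ring
    rw [hcast]
    have hx0 : 0 ≤ 3 * L * (F w0 - Fstar) / (q * ε) := by positivity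
    have hc1 : (S:ℝ) ≤ 3 * L * (F w0 - Fstar) / (q * ε) + 1 := by
      rw [hS]
      exact le_of_lt (Nat.ceil_lt_add_one hx0)
    have h1 : (S:ℝ) * (3*(n:ℝ)) ≤ (3 * L * (F w0 - Fstar) / (q * ε) + 1) * (3*(n:ℝ)) := by
      apply mul_le_mul_of_nonneg_right hc1 (by positivity)
    have hsq : Real.sqrt (n:ℝ) * Real.sqrt (n:ℝ) = (n:ℝ) := Real.mul_self_sqrt (Nat.cast_nonneg n)
    have hle : Real.sqrt (n:ℝ) ≤ q := by
      rw [hqdef]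
      exact Real.sqrt_le_sqrt (by linarith)
    have hnq : (n:ℝ) ≤ Real.sqrt (n:ℝ) * q := by
      calc (n:ℝ) = Real.sqrt (n:ℝ) * Real.sqrt (n:ℝ) := hsq.symm
        _ ≤ Real.sqrt (n:ℝ) * q := by
            apply mul_le_mul_of_nonneg_left hle (Real.sqrt_nonneg _)
    have h2 : (3 * L * (F w0 - Fstar) / (q * ε)) * (3*(n:ℝ))
        ≤ 9 * Real.sqrt (n:ℝ) * L * (F w0 - Fstar) / ε := by
      rw [div_mul_eq_mul_div, div_le_div_iff₀ (by positivity) hε]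
      have h3 : 0 ≤ 9 * L * (F w0 - Fstar) * ε := by positivity
      have h4 := mul_le_mul_of_nonneg_left hnq h3
      nlinarith [h4]
    linarith
  refine ⟨?_, part2⟩
  -- Part 1
  by_cases hS0 : S = 0
  · rw [hS0]
    simp [hε.le]
  have hSpos : 0 < S := Nat.pos_of_ne_zero hS0
  set N2 : ℝ := (Fintype.card (Fin S → Fin n → Fin n) : ℝ) with hN2
  have hN2pos : 0 < N2 := by
    rw [hN2]
    have : Nonempty (Fin S → Fin n → Fin n) := ⟨fun _ _ => ⟨0, hn⟩⟩
    exact_mod_cast Fintype.card_pos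
  set Eo : ℕ → ℝ := fun s => ∑ ω : Fin S → Fin n → Fin n,
    F (outerSeq d n n f F η w0 (pad2 hn ω) s) with hEo
  set G : ℕ → ℕ → ℝ := fun s t => ∑ ω : Fin S → Fin n → Fin n,
    ‖gradient F (innerSeq d n f F η (outerSeq d n n f F η w0 (pad2 hn ω) s)
      (pad2 hn ω s) t).1‖ ^ 2 with hG
  -- the per-epoch inequality
  have CL : ∀ s, s < S → ∑ t ∈ Finset.range (n+1), G s t + (2/η) * Eo (s+1) ≤ (2/η) * Eo s := by
    intro s hs
    set k : Fin S := ⟨s, hs⟩ with hk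
    set b0 : Fin n → Fin n := fun _ => ⟨0, hn⟩ with hb0
    -- congruence facts
    have houter : ∀ (b : Fin n → Fin n) (r : {j // j ≠ k} → (Fin n → Fin n)),
        outerSeq d n n f F η w0 (pad2 hn (ins k b r)) s
          = outerSeq d n n f F η w0 (pad2 hn (ins k b0 r)) s := by
      intro b r
      apply outerSeq_congr
      intro s' hs' t ht
      have hs'S : s' < S := hs'.trans hs
      have hne : (⟨s', hs'S⟩ : Fin S) ≠ k := by
        rw [hk]; exact Fin.ne_of_val_ne (Nat.ne_of_lt hs')
      simp only [pad2, dif_pos (And.intro hs'S ht)]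
      rw [ins_ne k b r hne, ins_ne k b0 r hne]
    have hiota : ∀ (b : Fin n → Fin n) (r : {j // j ≠ k} → (Fin n → Fin n)),
        pad2 hn (ins k b r) s = padI hn b := by
      intro b r
      funext t
      by_cases ht : t < n
      · simp only [pad2, padI, dif_pos (And.intro hs ht), dif_pos ht]
        have : (⟨s, hs⟩ : Fin S) = k := rfl
        rw [this, ins_self]
      · simp only [pad2, padI, dif_neg ht, dif_neg (fun h : s < S ∧ t < n => ht h.2)]
    have hnext : ∀ (b : Fin n → Fin n) (r : {j // j ≠ k} → (Fin n → Fin n)),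
        outerSeq d n n f F η w0 (pad2 hn (ins k b r)) (s+1)
          = (innerSeq d n f F η (outerSeq d n n f F η w0 (pad2 hn (ins k b0 r)) s)
              (padI hn b) (n+1)).1 := by
      intro b r
      show (innerSeq d n f F η (outerSeq d n n f F η w0 (pad2 hn (ins k b r)) s)
        (pad2 hn (ins k b r) s) (n + 1)).1 = _
      rw [houter b r, hiota b r]
    -- split all three sums at coordinate k
    have hsplitG : ∑ t ∈ Finset.range (n+1), G s t
        = ∑ r : {j // j ≠ k} → (Fin n → Fin n), ∑ b : Fin n → Fin n,
            ∑ t ∈ Finset.range (n+1),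
              ‖gradient F (innerSeq d n f F η
                (outerSeq d n n f F η w0 (pad2 hn (ins k b r)) s)
                (pad2 hn (ins k b r) s) t).1‖ ^ 2 := by
      simp only [hG]
      rw [Finset.sum_comm]
      exact sum_split k _
    have hsplitE1 : Eo (s+1) = ∑ r : {j // j ≠ k} → (Fin n → Fin n), ∑ b : Fin n → Fin n,
        F (outerSeq d n n f F η w0 (pad2 hn (ins k b r)) (s+1)) := by
      simp only [hEo]
      exact sum_split k _
    have hsplitE0 : Eo s = ∑ r : {j // j ≠ k} → (Fin n → Fin n), ∑ b : Fin n → Fin n,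
        F (outerSeq d n n f F η w0 (pad2 hn (ins k b r)) s) := by
      simp only [hEo]
      exact sum_split k _
    rw [hsplitG, hsplitE1, hsplitE0, Finset.mul_sum, Finset.mul_sum, ← Finset.sum_add_distrib]
    apply Finset.sum_le_sum
    intro r _
    set x0r := outerSeq d n n f F η w0 (pad2 hn (ins k b0 r)) s with hx0r
    have e1 : ∑ b : Fin n → Fin n, ∑ t ∈ Finset.range (n+1),
        ‖gradient F (innerSeq d n f F η
          (outerSeq d n n f F η w0 (pad2 hn (ins k b r)) s)
          (pad2 hn (ins k b r) s) t).1‖ ^ 2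
        = ∑ b : Fin n → Fin n, ∑ t ∈ Finset.range (n+1),
            ‖gradient F (innerSeq d n f F η x0r (padI hn b) t).1‖ ^ 2 := by
      refine Finset.sum_congr rfl fun b _ => ?_
      rw [houter b r, hiota b r]
    have e2 : ∑ b : Fin n → Fin n, F (outerSeq d n n f F η w0 (pad2 hn (ins k b r)) (s+1))
        = ∑ b : Fin n → Fin n, F ((innerSeq d n f F η x0r (padI hn b) (n+1)).1) := by
      refine Finset.sum_congr rfl fun b _ => ?_
      rw [hnext b r]
    have e3 : ∑ b : Fin n → Fin n, F (outerSeq d n n f F η w0 (pad2 hn (ins k b r)) s)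
        = ∑ b : Fin n → Fin n, F x0r := by
      refine Finset.sum_congr rfl fun b _ => ?_
      rw [houter b r]
    rw [e1, e2, e3]
    exact epoch hn f F hL hη0 hF hdiff havg hcond x0r
  -- telescoping
  set T : ℝ := ∑ s ∈ Finset.range S, ∑ t ∈ Finset.range (n+1), G s t with hT
  have htel : T ≤ (2/η) * Eo 0 - (2/η) * Eo S := by
    have h1 : ∀ s ∈ Finset.range S, ∑ t ∈ Finset.range (n+1), G s t
        ≤ (2/η) * Eo s - (2/η) * Eo (s+1) := by
      intro s hs
      have := CL s (Finset.mem_range.mp hs)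
      linarith
    calc T ≤ ∑ s ∈ Finset.range S, ((2/η) * Eo s - (2/η) * Eo (s+1)) :=
          Finset.sum_le_sum h1
      _ = (2/η) * Eo 0 - (2/η) * Eo S := Finset.sum_range_sub' (fun s => (2/η) * Eo s) S
  have hEo0 : Eo 0 = N2 * F w0 := by
    simp only [hEo]
    show ∑ _ω : Fin S → Fin n → Fin n, F w0 = N2 * F w0
    rw [Finset.sum_const, hN2, Finset.card_univ, nsmul_eq_mul]
  have hEoS : N2 * Fstar ≤ Eo S := by
    simp only [hEo]
    calc N2 * Fstar = ∑ _ω : Fin S → Fin n → Fin n, Fstar := by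
          rw [Finset.sum_const, hN2, Finset.card_univ, nsmul_eq_mul]
      _ ≤ _ := Finset.sum_le_sum fun ω _ => hFstar _
  have hTbound : T ≤ (2/η) * (N2 * (F w0 - Fstar)) := by
    have h2 : (2/η) * (N2 * Fstar) ≤ (2/η) * Eo S :=
      mul_le_mul_of_nonneg_left hEoS (by positivity)
    calc T ≤ (2/η) * Eo 0 - (2/η) * Eo S := htel
      _ ≤ (2/η) * (N2 * F w0) - (2/η) * (N2 * Fstar) := by rw [hEo0]; linarith
      _ = (2/η) * (N2 * (F w0 - Fstar)) := by ring
  -- rewrite the goal in terms of T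
  have hsar : ∀ s t, sarahE n n S hn (fun ω =>
      ‖gradient F (innerSeq d n f F η (outerSeq d n n f F η w0 ω s) (ω s) t).1‖ ^ 2)
      = G s t / N2 := by
    intro s t
    rw [sarahE_eq]
  have hgoalsum : ∑ s ∈ Finset.range S, ∑ t ∈ Finset.range (n + 1),
      sarahE n n S hn (fun ω =>
        ‖gradient F (innerSeq d n f F η (outerSeq d n n f F η w0 ω s) (ω s) t).1‖ ^ 2)
      = T / N2 := by
    rw [hT]
    rw [Finset.sum_div]
    refine Finset.sum_congr rfl fun s _ => ?_
    rw [Finset.sum_div]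
    exact Finset.sum_congr rfl fun t _ => hsar s t
  rw [hgoalsum]
  -- final numeric bound
  have hTN : T / N2 ≤ (2/η) * (F w0 - Fstar) := by
    rw [div_le_iff₀ hN2pos]
    calc T ≤ (2/η) * (N2 * (F w0 - Fstar)) := hTbound
      _ = 2 / η * (F w0 - Fstar) * N2 := by ring
  have hc : (0:ℝ) < ((n:ℝ)+1) * (S:ℝ) := by
    have : (0:ℝ) < (S:ℝ) := by exact_mod_cast hSpos
    positivity
  have hfin : (2/η) * (F w0 - Fstar) ≤ ((n:ℝ)+1) * (S:ℝ) * ε := by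
    rw [h2η]
    have hceil : 3 * L * (F w0 - Fstar) / (q * ε) ≤ (S:ℝ) := by
      rw [hS]; exact Nat.le_ceil _
    have h3 : 3 * L * (F w0 - Fstar) ≤ (S:ℝ) * (q * ε) := by
      rw [div_le_iff₀ (by positivity)] at hceil
      linarith
    have h4 := mul_le_mul_of_nonneg_left h3 hq0.le
    have h5 : q * ((S:ℝ) * (q * ε)) = (((n:ℝ)+1)) * ((S:ℝ) * ε) := by
      rw [← hq]; ring
    linarith [h4, h5]
  calc 1 / (((n:ℝ)+1) * (S:ℝ)) * (T / N2)
      ≤ 1 / (((n:ℝ)+1) * (S:ℝ)) * ((2/η) * (F w0 - Fstar)) := by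
        apply mul_le_mul_of_nonneg_left hTN (by positivity)
    _ ≤ ε := by
        rw [one_div, inv_mul_le_iff₀ hc]
        calc (2/η) * (F w0 - Fstar) ≤ ((n:ℝ)+1) * (S:ℝ) * ε := hfin
          _ = ((n:ℝ)+1) * (S:ℝ) * ε := rfl

end
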